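/- For α, β ∈ (0,1), the function h(v) = (1+v^{1/β})^β − (1−v)/α − v on [0,∞) satisfies h'(v) = (1+v^{−1/β})^{β−1} + 1/α − 1 > 0 for all v > 0, h(0) = 1 − 1/α < 0, and h(1) = 2^β − 1 > 0; hence h has a unique root v* in (0,1). Moreover, for this root, (1+v*^{1/β})^{−β} > 2^{−β}. -/

import Mathlib

theorem stmt12 (α β : ℝ) (hα : α ∈ Set.Ioo (0:ℝ) 1) (hβ : β ∈ Set.Ioo (0:ℝ) 1)
    (h : ℝ → ℝ)
    (hh : ∀ v : ℝ, h v = (1 + v ^ (1/β)) ^ β - (1 - v) / α - v) :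
    (∀ v : ℝ, 0 < v →
      deriv h v = (1 + v ^ (-1/β)) ^ (β - 1) + 1/α - 1 ∧ 0 < deriv h v) ∧
    h 0 = 1 - 1/α ∧ h 0 < 0 ∧
    h 1 = (2:ℝ) ^ β - 1 ∧ 0 < h 1 ∧
    (∃! v : ℝ, v ∈ Set.Ioo (0:ℝ) 1 ∧ h v = 0) ∧
    (∀ v ∈ Set.Ioo (0:ℝ) 1, h v = 0 →
      (2:ℝ) ^ (-β) < (1 + v ^ (1/β)) ^ (-β)) := by
  obtain ⟨hα0, hα1⟩ := hα
  obtain ⟨hβ0, hβ1⟩ := hβ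
  have hβne : β ≠ 0 := ne_of_gt hβ0
  have hfun : h = fun v => (1 + v ^ (1/β)) ^ β - (1 - v) / α - v := funext hh
  have hαinv : (1:ℝ) < 1/α := (one_lt_div hα0).mpr hα1
  -- derivative
  have key : ∀ v : ℝ, 0 < v →
      HasDerivAt h ((1 + v ^ (-1/β)) ^ (β - 1) + 1/α - 1) v := by
    intro v hv
    have h1 : HasDerivAt (fun v : ℝ => v ^ (1/β)) (1/β * v ^ (1/β - 1)) v :=
      Real.hasDerivAt_rpow_const (Or.inl hv.ne')
    have h2 : HasDerivAt (fun v : ℝ => 1 + v ^ (1/β)) (1/β * v ^ (1/β - 1)) v := by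
      exact ((hasDerivAt_const v (1:ℝ)).add h1).congr_deriv (zero_add _)
    have hb : (0:ℝ) < v ^ (1/β) := Real.rpow_pos_of_pos hv _
    have hpos : (0:ℝ) < 1 + v ^ (1/β) := by linarith
    have h3 : HasDerivAt (fun v : ℝ => (1 + v ^ (1/β)) ^ β)
        (1/β * v ^ (1/β - 1) * β * (1 + v ^ (1/β)) ^ (β - 1)) v :=
      h2.rpow_const (Or.inl hpos.ne')
    have h4 : HasDerivAt (fun v : ℝ => (1 - v) / α) (-(1/α)) v := by
      have := ((hasDerivAt_const v (1:ℝ)).sub (hasDerivAt_id v)).div_const α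
      simpa [neg_div, one_div] using this
    have h5 := (h3.sub h4).sub (hasDerivAt_id v)
    rw [hfun]
    convert h5 using 1
    case e'_4 => rfl
    case e'_5 => rfl
    case e'_8 => rfl
    have hsplit : 1 + v ^ (-1/β) = v ^ (-1/β) * (1 + v ^ (1/β)) := by
      have hone : v ^ (-1/β) * v ^ (1/β) = 1 := by
        have e0 : (-1/β + 1/β : ℝ) = 0 := by ring
        rw [← Real.rpow_add hv, e0, Real.rpow_zero]
      rw [mul_add, mul_one, hone]
      try ring
    have hexp : (-1/β) * (β - 1) = 1/β - 1 := by field_simp; ring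
    have hident : (1 + v ^ (-1/β)) ^ (β - 1)
        = v ^ (1/β - 1) * (1 + v ^ (1/β)) ^ (β - 1) := by
      rw [hsplit, Real.mul_rpow (Real.rpow_nonneg hv.le _) hpos.le,
        ← Real.rpow_mul hv.le, hexp]
    rw [hident]
    field_simp
    ring
  have hderiv : ∀ v : ℝ, 0 < v →
      deriv h v = (1 + v ^ (-1/β)) ^ (β - 1) + 1/α - 1 := fun v hv => (key v hv).deriv
  -- continuity
  have hcont : Continuous h := by
    rw [hfun]
    apply Continuous.sub
    apply Continuous.sub
    · apply Continuous.rpow_const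
      · exact continuous_const.add (continuous_iff_continuousAt.mpr fun x =>
          Real.continuousAt_rpow_const x _ (Or.inr (by positivity)))
      · intro x
        right; exact hβ0.le
    · exact (continuous_const.sub continuous_id).div_const α
    · exact continuous_id
  -- values
  have h0 : h 0 = 1 - 1/α := by
    rw [hh]
    rw [Real.zero_rpow (by positivity : (1/β : ℝ) ≠ 0)]
    norm_num [Real.one_rpow]
  have h0neg : h 0 < 0 := by rw [h0]; linarith
  have h1val : h 1 = (2:ℝ) ^ β - 1 := by
    rw [hh]; norm_num [Real.one_rpow]
  have h1pos : 0 < h 1 := by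
    rw [h1val]
    have : (1:ℝ) < 2 ^ β :=
      Real.one_lt_rpow_iff_of_pos (by norm_num) |>.mpr (Or.inl ⟨one_lt_two, hβ0⟩)
    linarith
  have hmono : StrictMonoOn h (Set.Icc 0 1) := by
    apply strictMonoOn_of_deriv_pos (convex_Icc 0 1) hcont.continuousOn
    intro x hx
    rw [interior_Icc] at hx
    rw [hderiv x hx.1]
    have : (0:ℝ) < (1 + x ^ (-1/β)) ^ (β - 1) := by
      apply Real.rpow_pos_of_pos
      have : (0:ℝ) < x ^ (-1/β) := Real.rpow_pos_of_pos hx.1 _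
      linarith
    linarith
  refine ⟨fun v hv => ⟨hderiv v hv, ?_⟩, h0, h0neg, h1val, h1pos, ?_, ?_⟩
  · rw [hderiv v hv]
    have : (0:ℝ) < (1 + v ^ (-1/β)) ^ (β - 1) := by
      apply Real.rpow_pos_of_pos
      have : (0:ℝ) < v ^ (-1/β) := Real.rpow_pos_of_pos hv _
      linarith
    linarith
  · -- existence and uniqueness
    have hsub : Set.Ioo (h 0) (h 1) ⊆ h '' Set.Ioo 0 1 :=
      intermediate_value_Ioo (by norm_num) hcont.continuousOn
    obtain ⟨v, hvmem, hvroot⟩ := hsub ⟨h0neg, h1pos⟩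
    refine ⟨v, ⟨hvmem, hvroot⟩, ?_⟩
    rintro w ⟨hwmem, hwroot⟩
    exact hmono.injOn (Set.mem_Icc_of_Ioo hwmem) (Set.mem_Icc_of_Ioo hvmem)
      (by rw [hwroot, hvroot])
  · rintro v ⟨hv0, hv1⟩ _
    have h1 : v ^ (1/β) < 1 := Real.rpow_lt_one hv0.le hv1 (by positivity)
    have h2 : (0:ℝ) < 1 + v ^ (1/β) := by
      have := Real.rpow_pos_of_pos hv0 (1/β); linarith
    exact Real.rpow_lt_rpow_of_neg h2 (by linarith) (by linarith)
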